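/- Let λ and μ be partitions of n with ℓ(μ) = l, λ dominating μ, λ_1 > λ_2 = ... = λ_l, and λ_1 - λ_2 = 1. Then μ = λ. -/

import Mathlib

/-- A partition encoded as a weakly decreasing, finitely supported function `ℕ → ℕ`
(0-indexed: `l 0` is the first part). -/
def IsPartition (l : ℕ → ℕ) : Prop :=
  Antitone l ∧ ∃ N, ∀ i, N ≤ i → l i = 0

/-- The size (sum of the parts). -/
noncomputable def psize (l : ℕ → ℕ) : ℕ := ∑ᶠ i, l i

/-- Dominance order: every partial sum of `l` is at least that of `m`. -/
def Dominates (l m : ℕ → ℕ) : Prop :=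
  ∀ k, ∑ i ∈ Finset.range k, m i ≤ ∑ i ∈ Finset.range k, l i

/-- `l` has exactly `h` (nonzero) parts. -/
def PartLength (l : ℕ → ℕ) (h : ℕ) : Prop :=
  (∀ i, i < h → 0 < l i) ∧ ∀ i, h ≤ i → l i = 0

/-- A semistandard Young tableau of shape `l`: positive entries in the cells
`(i, j)` with `j < l i`, zero outside, rows weakly increasing, columns strictly
increasing. -/
def IsSSYT (l : ℕ → ℕ) (T : ℕ → ℕ → ℕ) : Prop :=
  (∀ i j, j < l i → 1 ≤ T i j) ∧
  (∀ i j, l i ≤ j → T i j = 0) ∧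
  (∀ i j k, j ≤ k → k < l i → T i j ≤ T i k) ∧
  (∀ i i' j, i < i' → j < l i' → T i j < T i' j)

/-- The number of cells of `T` (inside shape `l`) with entry `m + 1`. -/
noncomputable def entryCount (l : ℕ → ℕ) (T : ℕ → ℕ → ℕ) (m : ℕ) : ℕ :=
  Set.ncard {p : ℕ × ℕ | p.2 < l p.1 ∧ T p.1 p.2 = m + 1}

/-- `T` has weight `w`: the entry `m + 1` occurs `w m` times. -/
def HasWeight (l : ℕ → ℕ) (T : ℕ → ℕ → ℕ) (w : ℕ → ℕ) : Prop :=
  ∀ m, entryCount l T m = w m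

/-- The Kostka number: the number of semistandard Young tableaux of shape `l`
and weight `w`. -/
noncomputable def kostka (l w : ℕ → ℕ) : ℕ :=
  Set.ncard {T : ℕ → ℕ → ℕ | IsSSYT l T ∧ HasWeight l T w}

theorem stmt5 (n l : ℕ) (lam mu : ℕ → ℕ)
    (hlp : IsPartition lam) (hln : psize lam = n)
    (hmp : IsPartition mu) (hmn : psize mu = n)
    (hml : PartLength mu l)
    (hd : Dominates lam mu)
    (h1 : lam 1 < lam 0)
    (h2 : ∀ i, 1 ≤ i → i < l → lam i = lam 1)
    (hdiff : lam 0 = lam 1 + 1) :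
    mu = lam := by
  obtain ⟨hla, N, hN⟩ := hlp
  obtain ⟨hma, _⟩ := hmp
  set c := lam 1 with hc
  have hmusum : ∑ i ∈ Finset.range l, mu i = n := by
    rw [← hmn, psize, finsum_eq_sum_of_support_subset]
    intro i hi
    simp only [Function.support, Set.mem_setOf_eq] at hi
    simp only [Finset.coe_range, Set.mem_Iio]
    by_contra h
    exact hi (hml.2 i (le_of_not_gt h))
  have hlamfull : ∀ M, N ≤ M → ∑ i ∈ Finset.range M, lam i = n := by
    intro M hM
    rw [← hln, psize, finsum_eq_sum_of_support_subset]
    intro i hi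
    simp only [Function.support, Set.mem_setOf_eq] at hi
    simp only [Finset.coe_range, Set.mem_Iio]
    by_contra h
    exact hi (hN i (le_trans hM (le_of_not_gt h)))
  have hlamsum : ∑ i ∈ Finset.range l, lam i = n := by
    have ha : ∑ i ∈ Finset.range l, lam i ≤ ∑ i ∈ Finset.range (max l N), lam i :=
      Finset.sum_le_sum_of_subset (Finset.range_subset_range.2 (le_max_left _ _))
    rw [hlamfull (max l N) (le_max_right _ _)] at ha
    have hb : n ≤ ∑ i ∈ Finset.range l, lam i := by
      have := hd l
      rwa [hmusum] at this
    omega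
  have hlamzero : ∀ i, l ≤ i → lam i = 0 := by
    intro i hi
    rcases le_or_gt N i with h | h
    · exact hN i h
    · have hM : l ≤ max l N := le_max_left _ _
      have hsplit : ∑ j ∈ Finset.Ico 0 l, lam j + ∑ j ∈ Finset.Ico l (max l N), lam j
          = ∑ j ∈ Finset.Ico 0 (max l N), lam j :=
        Finset.sum_Ico_consecutive _ (Nat.zero_le _) hM
      rw [← Finset.range_eq_Ico, ← Finset.range_eq_Ico] at hsplit
      rw [hlamsum, hlamfull _ (le_max_right _ _)] at hsplit
      have hz : ∑ j ∈ Finset.Ico l (max l N), lam j = 0 := by omega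
      have hmem : i ∈ Finset.Ico l (max l N) :=
        Finset.mem_Ico.2 ⟨hi, lt_of_lt_of_le h (le_max_right _ _)⟩
      exact (Finset.sum_eq_zero_iff.1 hz) i hmem
  have hl1 : 1 ≤ l := by
    by_contra h
    have : lam 0 = 0 := hlamzero 0 (by omega)
    omega
  -- partial sums of lam
  have hsum_k : ∀ k, 1 ≤ k → k ≤ l → ∑ i ∈ Finset.range k, lam i = k * c + 1 := by
    intro k hk hkl
    have heq : ∑ i ∈ Finset.range k, lam i
        = ∑ i ∈ Finset.range k, (c + if i = 0 then 1 else 0) := by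
      refine Finset.sum_congr rfl fun i hi => ?_
      rcases Nat.eq_zero_or_pos i with rfl | hip
      · simp [hdiff]
      · have : lam i = c := h2 i hip (lt_of_lt_of_le (Finset.mem_range.1 hi) hkl)
        simp [this, Nat.pos_iff_ne_zero.1 hip]
    rw [heq, Finset.sum_add_distrib, Finset.sum_const, Finset.card_range, smul_eq_mul]
    have : (∑ x ∈ Finset.range k, if x = 0 then 1 else 0) = 1 := by
      rw [Finset.sum_ite_eq' (Finset.range k) 0 (fun _ => 1)]
      simp only [Finset.mem_range]
      rw [if_pos (by omega)]
    omega
  have hn : n = l * c + 1 := by rw [← hlamsum, hsum_k l hl1 le_rfl]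
  -- tail bound for mu
  have htail : ∀ k, k < l → ∑ i ∈ Finset.Ico k l, mu i ≤ (l - k) * mu k := by
    intro k hk
    have := Finset.sum_le_card_nsmul (Finset.Ico k l) mu (mu k)
      (fun i hi => hma (Finset.mem_Ico.1 hi).1)
    simpa [Nat.card_Ico, smul_eq_mul] using this
  -- mu 0 ≥ c + 1
  have hmu0 : c + 1 ≤ mu 0 := by
    have ht := htail 0 (by omega)
    rw [← Finset.range_eq_Ico, hmusum, hn, Nat.sub_zero] at ht
    have : l * c < l * mu 0 := by omega
    have := Nat.lt_of_mul_lt_mul_left this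
    omega
  -- mu k ≥ c for 1 ≤ k < l
  have hmuk : ∀ k, 1 ≤ k → k < l → c ≤ mu k := by
    intro k hk hkl
    have hhead : ∑ i ∈ Finset.range k, mu i ≤ k * c + 1 := by
      have := hd k
      rwa [hsum_k k hk (le_of_lt hkl)] at this
    have hsplit : ∑ j ∈ Finset.Ico 0 k, mu j + ∑ j ∈ Finset.Ico k l, mu j
        = ∑ j ∈ Finset.Ico 0 l, mu j :=
      Finset.sum_Ico_consecutive _ (Nat.zero_le _) (le_of_lt hkl)
    rw [← Finset.range_eq_Ico, ← Finset.range_eq_Ico, hmusum] at hsplit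
    have ht := htail k hkl
    have hmul : l * c = k * c + (l - k) * c := by
      rw [← Nat.add_mul, Nat.add_sub_cancel' (le_of_lt hkl)]
    have hle : (l - k) * c ≤ (l - k) * mu k := by omega
    exact Nat.le_of_mul_le_mul_left hle (by omega)
  -- pointwise lam ≤ mu on range l
  have hpt : ∀ i ∈ Finset.range l, lam i ≤ mu i := by
    intro i hi
    rcases Nat.eq_zero_or_pos i with rfl | hip
    · omega
    · rw [h2 i hip (Finset.mem_range.1 hi)]
      exact hmuk i hip (Finset.mem_range.1 hi)
  have hsums : ∑ i ∈ Finset.range l, lam i = ∑ i ∈ Finset.range l, mu i := by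
    rw [hlamsum, hmusum]
  have heqall := (Finset.sum_eq_sum_iff_of_le hpt).1 hsums
  funext i
  rcases lt_or_ge i l with h | h
  · exact (heqall i (Finset.mem_range.2 h)).symm
  · rw [hml.2 i h, hlamzero i h]
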